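/- arXiv:astro-ph/0306571 — 2 statements merged into one kernel-verified Lean document; each statement's English description precedes it below -/
import Mathlib

section
/- Let P0 > 0 and let x, h, g be differentiable functions with g'(x̃) = h'(x(x̃)) for all x̃, and h'(x(x̃)) = (x(x̃) - x̃) / (S(x̃) + g(x̃) - h(x(x̃))) where S(x̃) = sqrt((x̃ - x(x̃))² + (g(x̃) - h(x(x̃)))²) and the denominator is nonzero. Then the optical path length P(x̃) = S(x̃) + g(x̃) - h(x(x̃)) has zero derivative, i.e., is constant. -/
open Real

/-- The optical path length `P(x̃) = S(x̃) + g(x̃) - h(x(x̃))` has zero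
derivative (is constant) for on-axis rays, given Snell's law at the first mirror
and equality of the mirror slopes. -/
theorem optical_path_length_conserved
    (P0 : ℝ) (hP0 : 0 < P0)
    (x h g S : ℝ → ℝ)
    (hx : Differentiable ℝ x) (hh : Differentiable ℝ h) (hg : Differentiable ℝ g)
    (hS : ∀ t, S t = Real.sqrt ((t - x t) ^ 2 + (g t - h (x t)) ^ 2))
    (hden : ∀ t, S t + g t - h (x t) ≠ 0)
    (hsnell : ∀ t, deriv h (x t) = (x t - t) / (S t + g t - h (x t)))
    (hpar : ∀ t, deriv g t = deriv h (x t)) :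
    ∀ t, deriv (fun s => S s + g s - h (x s)) t = 0 := by
  intro t
  set a := t - x t with ha
  set b := g t - h (x t) with hb
  have hSt : S t = Real.sqrt (a ^ 2 + b ^ 2) := hS t
  have hdb : S t + b ≠ 0 := by
    have := hden t
    rw [hb]
    simpa [add_sub_assoc] using this
  have hqne : a ^ 2 + b ^ 2 ≠ 0 := by
    intro hq0
    have hb0 : b = 0 := by nlinarith [sq_nonneg a, sq_nonneg b]
    have hS0 : S t = 0 := by rw [hSt, hq0, Real.sqrt_zero]
    exact hdb (by rw [hS0, hb0, add_zero])
  have hS0 : S t ≠ 0 := by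
    intro h0
    have hle : a ^ 2 + b ^ 2 ≤ 0 := by
      rw [← Real.sqrt_eq_zero'] ; rw [hSt] at h0 ; exact h0
    have : a ^ 2 + b ^ 2 = 0 := le_antisymm hle (by positivity)
    exact hqne this
  have h1 : HasDerivAt (fun s => s - x s) (1 - deriv x t) t :=
    (hasDerivAt_id t).sub (hx t).hasDerivAt
  have hcomp : HasDerivAt (fun s => h (x s)) (deriv h (x t) * deriv x t) t :=
    (hh (x t)).hasDerivAt.comp t (hx t).hasDerivAt
  have h2 : HasDerivAt (fun s => g s - h (x s))
      (deriv g t - deriv h (x t) * deriv x t) t :=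
    (hg t).hasDerivAt.sub hcomp
  have hq : HasDerivAt (fun s => (s - x s) ^ 2 + (g s - h (x s)) ^ 2)
      (2 * a * (1 - deriv x t) + 2 * b * (deriv g t - deriv h (x t) * deriv x t)) t := by
    have := (h1.fun_pow 2).fun_add (h2.fun_pow 2)
    refine this.congr_deriv ?_
    push_cast
    ring
  have hsq : HasDerivAt (fun s => Real.sqrt ((s - x s) ^ 2 + (g s - h (x s)) ^ 2))
      ((2 * a * (1 - deriv x t) + 2 * b * (deriv g t - deriv h (x t) * deriv x t)) /
        (2 * Real.sqrt (a ^ 2 + b ^ 2))) t := by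
    exact hq.sqrt hqne
  have hP : HasDerivAt (fun s => S s + g s - h (x s))
      ((2 * a * (1 - deriv x t) + 2 * b * (deriv g t - deriv h (x t) * deriv x t)) /
        (2 * Real.sqrt (a ^ 2 + b ^ 2)) + deriv g t - deriv h (x t) * deriv x t) t := by
    have hfun : (fun s => S s + g s - h (x s)) =
        fun s => Real.sqrt ((s - x s) ^ 2 + (g s - h (x s)) ^ 2) + g s - h (x s) := by
      funext s; rw [hS s]
    rw [hfun]
    exact (hsq.add (hg t).hasDerivAt).sub hcomp
  rw [hP.deriv, ← hSt, hpar t, hsnell t]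
  have hx1 : x t - t = -a := by rw [ha]; ring
  have hd1 : S t + g t - h (x t) = S t + b := by rw [hb]; ring
  rw [hx1, hd1]
  field_simp
  ring
end

section
/- If the apodization function A is a positive constant A ≠ 1, so that x(x̃) = x₀ + A·x̃, and the mirror slopes satisfy h'(x) = (x - x̃(x))/P0 with x̃(x) = (x - x₀)/A, and g'(x̃) = (x(x̃) - x̃)/P0, then both mirrors are parabolic: h(x) = c_h + (x - ξ)²/(4H) and g(x̃) = c_g + (x̃ - ξ)²/(4G) with ξ = -x₀/(A-1), H = A·P0/(2(A-1)), G = P0/(2(A-1)); in particular H = A·G. -/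
lemma aux_const (f : ℝ → ℝ) (a b : ℝ) (hf : Differentiable ℝ f)
    (hd : ∀ t, deriv f t = (t - a) / (2 * b)) (hb : b ≠ 0) :
    ∀ t, f t = (f 0 - (0 - a)^2 / (4*b)) + (t - a)^2 / (4*b) := by
  intro t
  have hq : Differentiable ℝ (fun t : ℝ => (t - a)^2 / (4*b)) := by
    fun_prop
  have hdq : ∀ t, deriv (fun t : ℝ => (t - a)^2 / (4*b)) t = (t - a) / (2 * b) := by
    intro t
    have : HasDerivAt (fun t : ℝ => (t - a)^2 / (4*b)) ((t - a) / (2 * b)) t := by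
      have h1 : HasDerivAt (fun t : ℝ => (t - a)^2) (2 * (t - a)) t := by
        simpa using ((hasDerivAt_id t).sub_const a).fun_pow 2
      have : HasDerivAt (fun t : ℝ => (t - a)^2 / (4*b)) (2 * (t - a) / (4 * b)) t := h1.div_const (4*b)
      convert this using 1
      field_simp
      ring
    exact this.deriv
  have hc := is_const_of_deriv_eq_zero (f := fun t => f t - (t - a)^2 / (4*b))
    (hf.sub hq) ?_ t 0
  · have : f t - (t - a)^2 / (4*b) = f 0 - (0 - a)^2 / (4*b) := hc
    linarith
  · intro x
    rw [deriv_fun_sub (hf x) (hq x), hd, hdq]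
    ring

/-- For a constant apodization `A ≠ 1`, the decoupled mirror slope
equations force both mirrors to be parabolic, with focal lengths
`H = A·P0/(2(A-1))`, `G = P0/(2(A-1))` (so `H = A·G`) and common
centerline `ξ = -x₀/(A-1)`. -/
theorem constant_apodization_parabolic_mirrors
    (P0 A x₀ : ℝ) (hP0 : 0 < P0) (hA : 0 < A) (hA1 : A ≠ 1)
    (h g : ℝ → ℝ)
    (hhd : Differentiable ℝ h) (hgd : Differentiable ℝ g)
    (hh : ∀ t, deriv h t = (t - (t - x₀) / A) / P0)
    (hg : ∀ t, deriv g t = ((x₀ + A * t) - t) / P0) :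
    ∃ cₕ c_g : ℝ,
      (∀ t, h t = cₕ + (t - (-x₀ / (A - 1))) ^ 2 / (4 * (A * P0 / (2 * (A - 1))))) ∧
      (∀ t, g t = c_g + (t - (-x₀ / (A - 1))) ^ 2 / (4 * (P0 / (2 * (A - 1))))) ∧
      A * P0 / (2 * (A - 1)) = A * (P0 / (2 * (A - 1))) := by
  have hA0 : A ≠ 0 := ne_of_gt hA
  have hA1' : A - 1 ≠ 0 := sub_ne_zero.mpr hA1
  have hP0' : P0 ≠ 0 := ne_of_gt hP0
  have hH : A * P0 / (2 * (A - 1)) ≠ 0 :=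
    div_ne_zero (mul_ne_zero hA0 hP0') (mul_ne_zero two_ne_zero hA1')
  have hG : P0 / (2 * (A - 1)) ≠ 0 :=
    div_ne_zero hP0' (mul_ne_zero two_ne_zero hA1')
  have H1 := aux_const h (-x₀ / (A - 1)) (A * P0 / (2 * (A - 1))) hhd ?_ hH
  have H2 := aux_const g (-x₀ / (A - 1)) (P0 / (2 * (A - 1))) hgd ?_ hG
  · refine ⟨_, _, fun t => H1 t, fun t => H2 t, by field_simp⟩
  · intro t; rw [hg]; field_simp; ring
  · intro t; rw [hh]; field_simp; ring
end
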